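/- Let m and n be coprime positive integers and let q ≥ 0. Then ∑_{d ∣ m} c_{d·n}(q) = m · c_n(q/m) if m divides q, and ∑_{d ∣ m} c_{d·n}(q) = 0 otherwise, where the sum runs over all positive divisors d of m. -/

import Mathlib

open Finset

/-- The Ramanujan sum `c_n(q)`, the sum of the `q`-th powers of the primitive
`n`-th roots of unity. -/
noncomputable def ramanujanSum (n q : ℕ) : ℂ :=
  ∑ k ∈ (Finset.Icc 1 n).filter (fun k => Nat.gcd k n = 1),
    Complex.exp (2 * Real.pi * Complex.I * k * q / n)

lemma exp_scale (k N s q : ℕ) (hN : N ≠ 0) (hs : s ≠ 0) :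
    Complex.exp (2 * Real.pi * Complex.I * (↑(k * s)) * q / (↑(N * s))) =
      Complex.exp (2 * Real.pi * Complex.I * k * q / N) := by
  congr 1
  have hN' : (N:ℂ) ≠ 0 := Nat.cast_ne_zero.mpr hN
  have hs' : (s:ℂ) ≠ 0 := Nat.cast_ne_zero.mpr hs
  push_cast
  field_simp

lemma geom_aux (m q : ℕ) (hm : 0 < m) :
    ∑ t ∈ Finset.range m, Complex.exp (2 * Real.pi * Complex.I * t * q / m) =
      if m ∣ q then (m : ℂ) else 0 := by
  have hm' : (m:ℂ) ≠ 0 := Nat.cast_ne_zero.mpr hm.ne'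
  have hpi : (Real.pi:ℂ) ≠ 0 := by exact_mod_cast Real.pi_ne_zero
  have h2 : (2 * (Real.pi:ℂ) * Complex.I) ≠ 0 := by simp [hpi, Complex.I_ne_zero]
  set z : ℂ := Complex.exp (2 * Real.pi * Complex.I * q / m) with hz
  have hpow : ∀ t : ℕ, Complex.exp (2 * Real.pi * Complex.I * t * q / m) = z ^ t := by
    intro t
    rw [hz, ← Complex.exp_nat_mul]
    congr 1
    field_simp
  rw [Finset.sum_congr rfl (fun t _ => hpow t)]
  by_cases hdvd : m ∣ q
  · have : z = 1 := by
      obtain ⟨c, rfl⟩ := hdvd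
      rw [hz]
      have he : 2 * Real.pi * Complex.I * ↑(m * c) / ↑m = (c : ℂ) * (2 * Real.pi * Complex.I) := by
        push_cast; field_simp
      rw [he]
      exact_mod_cast Complex.exp_int_mul_two_pi_mul_I c
    simp [this, hdvd]
  · have hz1 : z ≠ 1 := by
      intro hzz
      rw [hz, Complex.exp_eq_one_iff] at hzz
      obtain ⟨c, hc⟩ := hzz
      apply hdvd
      have hq : (q:ℂ) = c * m := by
        field_simp at hc
        apply mul_left_cancel₀ h2
        linear_combination (2 * Real.pi * Complex.I) * hc
      have hqz : (q:ℤ) = c * m := by exact_mod_cast hq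
      exact Int.natCast_dvd_natCast.mp ⟨c, by linarith⟩
    have hzm : z ^ m = 1 := by
      rw [hz, ← Complex.exp_nat_mul]
      have he : (m:ℂ) * (2 * Real.pi * Complex.I * q / m) = (q : ℂ) * (2 * Real.pi * Complex.I) := by
        field_simp
      rw [he]
      exact_mod_cast Complex.exp_int_mul_two_pi_mul_I q
    rw [geom_sum_eq hz1, hzm]
    simp [hdvd]

lemma sumA (m n q : ℕ) (hm : 0 < m) (hn : 0 < n) (h : Nat.Coprime m n) :
    ∑ d ∈ m.divisors, ramanujanSum (d * n) q =
      ∑ k ∈ (Finset.Icc 1 (m * n)).filter (fun k => Nat.gcd k n = 1),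
        Complex.exp (2 * Real.pi * Complex.I * k * q / (↑(m * n))) := by
  unfold ramanujanSum
  rw [Finset.sum_sigma' m.divisors
      (fun d => (Finset.Icc 1 (d * n)).filter (fun k => Nat.gcd k (d * n) = 1))
      (fun d k => Complex.exp (2 * Real.pi * Complex.I * k * q / (↑(d * n))))]
  apply Finset.sum_nbij' (i := fun p => p.2 * (m / p.1))
    (j := fun k => ⟨m / Nat.gcd k m, k / Nat.gcd k m⟩)
  · rintro ⟨d, k⟩ hp
    simp only [Finset.mem_sigma, Nat.mem_divisors, Finset.mem_filter, Finset.mem_Icc] at hp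
    obtain ⟨⟨hd, hm0⟩, ⟨hk1, hk2⟩, hco⟩ := hp
    have hd0 : 0 < d := Nat.pos_of_dvd_of_pos hd hm
    have hs0 : 0 < m / d := Nat.div_pos (Nat.le_of_dvd hm hd) hd0
    simp only [Finset.mem_filter, Finset.mem_Icc]
    refine ⟨⟨Nat.one_le_iff_ne_zero.mpr (Nat.mul_ne_zero (by omega) hs0.ne'), ?_⟩, ?_⟩
    · calc k * (m / d) ≤ d * n * (m / d) := Nat.mul_le_mul_right _ hk2
        _ = m * n := by rw [mul_comm d n, mul_assoc, Nat.mul_div_cancel' hd, mul_comm]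
    · have hkn : Nat.Coprime k n := Nat.Coprime.coprime_dvd_right (dvd_mul_left n d) hco
      have hsn : Nat.Coprime (m / d) n := h.coprime_dvd_left (Nat.div_dvd_of_dvd hd)
      exact Nat.Coprime.mul hkn hsn
  · intro k hk
    simp only [Finset.mem_filter, Finset.mem_Icc] at hk
    obtain ⟨⟨hk1, hk2⟩, hkn⟩ := hk
    set g := Nat.gcd k m with hg
    have hg0 : 0 < g := Nat.gcd_pos_of_pos_right k hm
    have hgk : g ∣ k := Nat.gcd_dvd_left k m
    have hgm : g ∣ m := Nat.gcd_dvd_right k m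
    simp only [Finset.mem_sigma, Nat.mem_divisors, Finset.mem_filter, Finset.mem_Icc]
    refine ⟨⟨Nat.div_dvd_of_dvd hgm, hm.ne'⟩, ⟨?_, ?_⟩, ?_⟩
    · exact (Nat.one_le_div_iff hg0).mpr (Nat.le_of_dvd hk1 hgk)
    · calc k / g ≤ m * n / g := Nat.div_le_div_right hk2
        _ = m / g * n := by rw [Nat.mul_comm m n, Nat.mul_div_assoc n hgm, mul_comm]
    · refine Nat.Coprime.mul_right (Nat.coprime_div_gcd_div_gcd hg0) ?_
      exact Nat.Coprime.coprime_dvd_left (Nat.div_dvd_of_dvd hgk) hkn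
  · rintro ⟨d, k⟩ hp
    simp only [Finset.mem_sigma, Nat.mem_divisors, Finset.mem_filter, Finset.mem_Icc] at hp
    obtain ⟨⟨hd, hm0⟩, ⟨hk1, hk2⟩, hco⟩ := hp
    have hd0 : 0 < d := Nat.pos_of_dvd_of_pos hd hm
    have hs0 : 0 < m / d := Nat.div_pos (Nat.le_of_dvd hm hd) hd0
    have hkd : Nat.Coprime k d := Nat.Coprime.coprime_dvd_right (Dvd.intro n rfl) hco
    have hgcd : Nat.gcd (k * (m / d)) m = m / d := by
      nth_rewrite 2 [show m = d * (m / d) from (Nat.mul_div_cancel' hd).symm]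
      rw [Nat.gcd_mul_right, hkd]
      simp
    simp only [hgcd]
    have e1 : m / (m / d) = d := Nat.div_div_self hd hm.ne'
    have e2 : k * (m / d) / (m / d) = k := Nat.mul_div_cancel k hs0
    simp [e1, e2]
  · intro k hk
    simp only [Finset.mem_filter, Finset.mem_Icc] at hk
    obtain ⟨⟨hk1, hk2⟩, hkn⟩ := hk
    have hg0 : 0 < Nat.gcd k m := Nat.gcd_pos_of_pos_right k hm
    have e1 : m / (m / Nat.gcd k m) = Nat.gcd k m :=
      Nat.div_div_self (Nat.gcd_dvd_right k m) hm.ne'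
    simp only [e1]
    exact Nat.div_mul_cancel (Nat.gcd_dvd_left k m)
  · rintro ⟨d, k⟩ hp
    simp only [Finset.mem_sigma, Nat.mem_divisors, Finset.mem_filter, Finset.mem_Icc] at hp
    obtain ⟨⟨hd, hm0⟩, ⟨hk1, hk2⟩, hco⟩ := hp
    have hd0 : 0 < d := Nat.pos_of_dvd_of_pos hd hm
    have hs0 : 0 < m / d := Nat.div_pos (Nat.le_of_dvd hm hd) hd0
    have hmn : m * n = d * n * (m / d) := by
      rw [mul_comm d n, mul_assoc, Nat.mul_div_cancel' hd, mul_comm]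
    rw [show (↑(m*n) : ℂ) = ↑(d * n * (m / d)) by rw [hmn]]
    exact (exp_scale k (d * n) (m / d) q (Nat.mul_ne_zero hd0.ne' hn.ne') hs0.ne').symm

lemma sumB (m n q : ℕ) (hm : 0 < m) (hn : 0 < n) :
    ∑ k ∈ (Finset.Icc 1 (m * n)).filter (fun k => Nat.gcd k n = 1),
        Complex.exp (2 * Real.pi * Complex.I * k * q / (↑(m * n))) =
      ∑ p ∈ ((Finset.Icc 1 n).filter (fun k => Nat.gcd k n = 1)) ×ˢ Finset.range m,
        Complex.exp (2 * Real.pi * Complex.I * (↑(p.1 + n * p.2)) * q / (↑(m * n))) := by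
  apply Finset.sum_nbij' (i := fun k => ((k - 1) % n + 1, (k - 1) / n))
    (j := fun p => p.1 + n * p.2)
  · intro k hk
    simp only [Finset.mem_filter, Finset.mem_Icc] at hk
    obtain ⟨⟨hk1, hk2⟩, hkn⟩ := hk
    simp only [Finset.mem_product, Finset.mem_filter, Finset.mem_Icc, Finset.mem_range]
    have hmod : (k - 1) % n < n := Nat.mod_lt _ hn
    refine ⟨⟨⟨Nat.le_add_left 1 _, hmod⟩, ?_⟩, ?_⟩
    · have hkey : k = ((k - 1) % n + 1) + n * ((k - 1) / n) := by
        have := Nat.mod_add_div (k - 1) n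
        omega
      have := Nat.gcd_add_mul_right_left n ((k - 1) % n + 1) ((k-1)/n)
      rw [hkey] at hkn
      rw [mul_comm n ((k-1)/n)] at hkn
      rwa [this] at hkn
    · have : k - 1 < m * n := by omega
      rw [Nat.div_lt_iff_lt_mul hn]
      omega
  · rintro ⟨j, t⟩ hp
    simp only [Finset.mem_product, Finset.mem_filter, Finset.mem_Icc, Finset.mem_range] at hp
    obtain ⟨⟨⟨hj1, hj2⟩, hjn⟩, ht⟩ := hp
    simp only [Finset.mem_filter, Finset.mem_Icc]
    refine ⟨⟨by omega, ?_⟩, ?_⟩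
    · have ht' : n * (t + 1) ≤ n * m := Nat.mul_le_mul_left n (by omega)
      calc j + n * t ≤ n * t + n := by omega
        _ = n * (t + 1) := by ring
        _ ≤ n * m := ht'
        _ = m * n := mul_comm n m
    · rw [mul_comm n t]
      rw [Nat.gcd_add_mul_right_left n j t]
      exact hjn
  · intro k hk
    simp only [Finset.mem_filter, Finset.mem_Icc] at hk
    show ((k - 1) % n + 1) + n * ((k - 1) / n) = k
    have := Nat.mod_add_div (k - 1) n
    omega
  · rintro ⟨j, t⟩ hp
    simp only [Finset.mem_product, Finset.mem_filter, Finset.mem_Icc, Finset.mem_range] at hp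
    obtain ⟨⟨⟨hj1, hj2⟩, hjn⟩, ht⟩ := hp
    have h1 : j + n * t - 1 = (j - 1) + n * t := by omega
    have hmod : ((j - 1) + n * t) % n = j - 1 := by
      rw [Nat.add_mul_mod_self_left]; exact Nat.mod_eq_of_lt (by omega)
    have hdiv : ((j - 1) + n * t) / n = t := by
      rw [Nat.add_mul_div_left _ _ hn, Nat.div_eq_of_lt (by omega)]
      omega
    show ((j + n * t - 1) % n + 1, (j + n * t - 1) / n) = (j, t)
    rw [h1, hmod, hdiv]
    simp only [Prod.mk.injEq]
    exact ⟨by omega, trivial⟩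
  · intro k hk
    simp only [Finset.mem_filter, Finset.mem_Icc] at hk
    have hmd := Nat.mod_add_div (k - 1) n
    have hkey : (k - 1) % n + 1 + n * ((k - 1) / n) = k := by omega
    dsimp only
    rw [hkey]

theorem sum_ramanujanSum_divisors (m n : ℕ) (hm : 0 < m) (hn : 0 < n)
    (h : Nat.Coprime m n) (q : ℕ) :
    ∑ d ∈ m.divisors, ramanujanSum (d * n) q =
      if m ∣ q then (m : ℂ) * ramanujanSum n (q / m) else 0 := by
  have hm' : (m:ℂ) ≠ 0 := Nat.cast_ne_zero.mpr hm.ne'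
  have hn' : (n:ℂ) ≠ 0 := Nat.cast_ne_zero.mpr hn.ne'
  rw [sumA m n q hm hn h, sumB m n q hm hn]
  have hsplit : ∀ p : ℕ × ℕ,
      Complex.exp (2 * Real.pi * Complex.I * (↑(p.1 + n * p.2)) * q / (↑(m * n))) =
        Complex.exp (2 * Real.pi * Complex.I * p.1 * q / (↑(m * n))) *
          Complex.exp (2 * Real.pi * Complex.I * p.2 * q / m) := by
    rintro ⟨j, t⟩
    rw [← Complex.exp_add]
    congr 1
    push_cast
    field_simp
  rw [Finset.sum_congr rfl (fun p _ => hsplit p), Finset.sum_product]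
  dsimp only
  rw [← Finset.sum_mul_sum]
  rw [geom_aux m q hm]
  by_cases hdvd : m ∣ q
  · simp only [hdvd, if_true]
    rw [mul_comm]
    congr 1
    unfold ramanujanSum
    apply Finset.sum_congr rfl
    intro j hj
    congr 1
    obtain ⟨c, rfl⟩ := hdvd
    rw [Nat.mul_div_cancel_left c hm]
    push_cast
    field_simp
  · simp [hdvd]
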